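/- Suppose Δ and π are groups, A a finite abelian group (trivially or nontrivially a Δ-module) with Â = Hom(A,ℤ/n), such that for every i the cup product H^i(Δ,A) × H^{3-i}(Δ,π;Â) → H³(Δ,π;ℤ/n) ≅ (1/n)ℤ/ℤ is a perfect pairing of finite abelian groups. If additionally the long exact sequence relating H*(Δ,π;A), H*(Δ,A), H*(π,A) holds and Â ≅ A as abelian groups, then χ(Δ,A)² = χ(π,A), where χ denotes the multiplicative Euler characteristic χ(Φ,M) = ∏_i (#H^i(Φ,M))^{(-1)^i} (all groups assumed finite and almost all trivial). -/

import Mathlib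

open scoped DirectSum

section Helpers

private lemma stmt18_card_one (X : Type*) [Zero X] (h : Subsingleton X) : Nat.card X = 1 := by
  haveI := h
  haveI : Unique X := ⟨⟨0⟩, fun a => Subsingleton.elim a 0⟩
  exact Nat.card_unique

private lemma stmt18_tor_card (n : ℕ) (hn : 0 < n) :
    Nat.card {x : AddCircle (1:ℚ) // (n:ℤ) • x = 0} = n := by
  haveI : Fact ((0:ℚ) < 1) := ⟨one_pos⟩
  set u : AddCircle (1:ℚ) := (((1:ℚ) / n : ℚ) : AddCircle (1:ℚ)) with hu_def
  have hu : addOrderOf u = n := AddCircle.addOrderOf_period_div hn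
  have hnu : ((n:ℤ)) • u = 0 := by
    rw [← addOrderOf_dvd_iff_zsmul_eq_zero, hu]
  set g : ZMod n →+ AddCircle (1:ℚ) := ZMod.lift n ⟨zmultiplesHom _ u, by simpa using hnu⟩ with hg
  have hgcast : ∀ m : ℤ, g (m : ZMod n) = m • u := by
    intro m; simp [hg]
  have hginj : Function.Injective g := by
    rw [injective_iff_map_eq_zero]
    intro a ha
    obtain ⟨m, rfl⟩ := ZMod.intCast_surjective a
    rw [hgcast] at ha
    rw [ZMod.intCast_zmod_eq_zero_iff_dvd]
    rw [← hu]
    exact addOrderOf_dvd_iff_zsmul_eq_zero.mpr ha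
  have key : Function.Bijective
      (fun k : ZMod n => (⟨g k, by
        rw [← map_zsmul]
        have : ((n:ℤ)) • k = 0 := by
          rw [zsmul_eq_mul]; push_cast; simp [ZMod.natCast_self]
        rw [this, map_zero]⟩ : {x : AddCircle (1:ℚ) // (n:ℤ) • x = 0})) := by
    constructor
    · intro a b hab
      exact hginj (congrArg Subtype.val hab)
    · rintro ⟨x, hx⟩
      induction x using QuotientAddGroup.induction_on with
      | H q =>
      rw [← QuotientAddGroup.mk_zsmul] at hx
      rw [QuotientAddGroup.eq_zero_iff] at hx
      obtain ⟨m, hm⟩ := AddSubgroup.mem_zmultiples_iff.mp hx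
      refine ⟨(m : ZMod n), Subtype.ext ?_⟩
      simp only
      rw [hgcast, hu_def, ← QuotientAddGroup.mk_zsmul]
      congr 1
      have hn' : (n:ℚ) ≠ 0 := by positivity
      field_simp
      have hm' : (m:ℚ) = n * q := by simpa [zsmul_eq_mul] using hm
      rw [zsmul_eq_mul, hm', mul_one_div, mul_div_cancel_left₀ _ hn']
  have h2 := Nat.card_congr (Equiv.ofBijective _ key)
  rw [Nat.card_zmod] at h2
  exact h2.symm

private lemma stmt18_zmod_hom_card (n : ℕ) (hn : 0 < n) :
    Nat.card (ZMod n →+ AddCircle (1:ℚ)) = n := by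
  have e1 : {f : ℤ →+ AddCircle (1:ℚ) // f (n:ℤ) = 0} ≃ (ZMod n →+ AddCircle (1:ℚ)) :=
    ZMod.lift n
  have e3 : {x : AddCircle (1:ℚ) // (n:ℤ) • x = 0}
      ≃ {f : ℤ →+ AddCircle (1:ℚ) // f (n:ℤ) = 0} :=
    (zmultiplesHom (AddCircle (1:ℚ))).subtypeEquiv
      (fun x => by simp [zmultiplesHom_apply])
  have h2 := Nat.card_congr (e3.trans e1)
  rw [stmt18_tor_card n hn] at h2
  exact h2.symm

private lemma stmt18_char_card (G : Type) [AddCommGroup G] [Finite G] :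
    Nat.card (G →+ AddCircle (1:ℚ)) = Nat.card G := by
  classical
  obtain ⟨ι, _, n, hn, ⟨e⟩⟩ := AddCommGroup.equiv_directSum_zmod_of_finite' G
  have e1 : (G →+ AddCircle (1:ℚ)) ≃+ ((⨁ i, ZMod (n i)) →+ AddCircle (1:ℚ)) :=
    AddEquiv.addMonoidHomCongrLeft e
  have e2 : (∀ i, ZMod (n i) →+ AddCircle (1:ℚ)) ≃+ ((⨁ i, ZMod (n i)) →+ AddCircle (1:ℚ)) :=
    DFinsupp.liftAddHom
  have e3 : (⨁ i, ZMod (n i)) ≃ (∀ i, ZMod (n i)) := DFinsupp.equivFunOnFintype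
  rw [Nat.card_congr e1.toEquiv, ← Nat.card_congr e2.toEquiv, Nat.card_congr e.toEquiv,
    Nat.card_congr e3, Nat.card_pi, Nat.card_pi]
  exact Finset.prod_congr rfl fun i _ => by
    rw [stmt18_zmod_hom_card (n i) (Nat.zero_lt_of_lt (hn i)), Nat.card_zmod]

private lemma stmt18_card_split {X Y : Type} [AddCommGroup X] [AddCommGroup Y] (f : X →+ Y) :
    Nat.card X = Nat.card f.range * Nat.card f.ker := by
  rw [AddSubgroup.card_eq_card_quotient_mul_card_addSubgroup f.ker,
    Nat.card_congr (QuotientAddGroup.quotientKerEquivRange f).toEquiv]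

private lemma stmt18_range_one_left {X Y : Type} [AddCommGroup X] [AddCommGroup Y]
    (f : X →+ Y) (h : Subsingleton X) : Nat.card f.range = 1 := by
  refine stmt18_card_one _ ⟨?_⟩
  rintro ⟨_, x, rfl⟩ ⟨_, y, rfl⟩
  rw [Subsingleton.elim x y]

private lemma stmt18_range_one_right {X Y : Type} [AddCommGroup X] [AddCommGroup Y]
    (f : X →+ Y) (h : Subsingleton Y) : Nat.card f.range = 1 := by
  refine stmt18_card_one _ ⟨?_⟩
  intro a b
  exact Subtype.ext (Subsingleton.elim _ _)

private lemma stmt18_tele (g : ℤ → ℚ) (hg : ∀ i, g i ≠ 0) (N : ℕ) :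
    (∏ t ∈ Finset.range N, (g ((t:ℤ)-1) * g t) ^ ((-1:ℤ)^t)) * g ((N:ℤ)-1) ^ ((-1:ℤ)^N)
      = g (-1) := by
  induction N with
  | zero => simp
  | succ n ih =>
    rw [Finset.prod_range_succ, pow_succ]
    push_cast
    rw [show ((n:ℤ) + 1 - 1) = (n:ℤ) by ring, mul_assoc,
      show (g ((n:ℤ)-1) * g (n:ℤ)) ^ ((-1:ℤ)^n) * g (n:ℤ) ^ ((-1:ℤ)^n * -1)
          = g ((n:ℤ)-1) ^ ((-1:ℤ)^n) from by
        rw [mul_zpow, mul_assoc, ← zpow_add₀ (hg _)]; simp]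
    exact ih

private lemma stmt18_key (a b c k r s : ℤ → ℚ)
    (hk : ∀ i, k i ≠ 0)
    (ha : ∀ i : ℤ, a (i+1) = r (i+1) * k i)
    (hb : ∀ i : ℤ, b i = s i * r i)
    (hc : ∀ i : ℤ, c i = k i * s i)
    (N : ℕ) (hk0 : k (-1) = 1) (hkN : k ((N:ℤ) - 1) = 1) :
    ∏ t ∈ Finset.range N, b t ^ ((-1:ℤ)^t)
      = (∏ t ∈ Finset.range N, a t ^ ((-1:ℤ)^t))
        * ∏ t ∈ Finset.range N, c t ^ ((-1:ℤ)^t) := by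
  have ha' : ∀ i : ℤ, a i = r i * k (i-1) := by
    intro i; have := ha (i-1); simpa using this
  have htele := stmt18_tele k hk N
  rw [hkN] at htele
  simp only [one_zpow, mul_one] at htele
  calc ∏ t ∈ Finset.range N, b (t:ℤ) ^ ((-1:ℤ)^t)
      = (∏ t ∈ Finset.range N, (a t * c t) ^ ((-1:ℤ)^t))
        * (∏ t ∈ Finset.range N, (k ((t:ℤ)-1) * k t) ^ ((-1:ℤ)^t))⁻¹ := ?_
    _ = (∏ t ∈ Finset.range N, a (t:ℤ) ^ ((-1:ℤ)^t))
        * ∏ t ∈ Finset.range N, c (t:ℤ) ^ ((-1:ℤ)^t) := by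
        rw [htele, hk0]; simp [mul_zpow, Finset.prod_mul_distrib]
  rw [← Finset.prod_inv_distrib, ← Finset.prod_mul_distrib]
  apply Finset.prod_congr rfl
  intro t _
  rw [ha', hb, hc,
    eq_mul_inv_iff_mul_eq₀ (zpow_ne_zero _ (mul_ne_zero (hk _) (hk _))), ← mul_zpow]
  congr 1
  ring

private lemma stmt18_prodext (h : ℕ → ℚ) (N : ℕ) (hout : ∀ t : ℕ, N ≤ t → h t = 1)
    (hout4 : ∀ t : ℕ, 4 ≤ t → h t = 1) :
    ∏ t ∈ Finset.range N, h t = ∏ t ∈ Finset.range 4, h t := by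
  rcases le_total N 4 with hN | hN
  · exact Finset.prod_subset (Finset.range_subset_range.mpr hN)
      (fun x _ hx => hout x (by simpa using hx))
  · exact (Finset.prod_subset (Finset.range_subset_range.mpr hN)
      (fun x _ hx => hout4 x (by simpa using hx))).symm

private lemma stmt18_dualprod (f : ℤ → ℚ) (N : ℕ)
    (h1 : ∀ i : ℤ, i < 0 → f i = 1) (h2 : ∀ i : ℤ, 4 ≤ i → f i = 1)
    (h3 : ∀ i : ℤ, (N:ℤ) ≤ i → f i = 1) (h4 : ∀ i : ℤ, i + N ≤ 3 → f i = 1) :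
    ∏ t ∈ Finset.range N, f (3 - t) ^ ((-1:ℤ)^t)
      = (∏ t ∈ Finset.range N, f t ^ ((-1:ℤ)^t))⁻¹ := by
  rw [stmt18_prodext (fun t => f (3 - t) ^ ((-1:ℤ)^t)) N
      (fun t ht => by
        rw [h4 _ (by omega), one_zpow])
      (fun t ht => by
        rw [h1 _ (by omega), one_zpow]),
    stmt18_prodext (fun t => f t ^ ((-1:ℤ)^t)) N
      (fun t ht => by
        rw [h3 _ (by omega), one_zpow])
      (fun t ht => by
        rw [h2 _ (by omega), one_zpow])]
  simp only [Finset.prod_range_succ, Finset.prod_range_zero, one_mul]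
  norm_num
  ring

end Helpers

/-- Abstract form of the Euler-characteristic duality: suppose `H^•(Δ,A)`, `H^•(π,A)`,
`H^•(Δ,π;A)` and `H^•(Δ,π;Â)` are families of finite abelian groups (vanishing in
negative degrees) such that:
* for every `i` the cup product gives a perfect pairing
  `H^i(Δ,A) × H^{3-i}(Δ,π;Â) → H³(Δ,π;ℤ/n) ≅ (1/n)ℤ/ℤ`, expressed as an isomorphism
  of `H^i(Δ,A)` with the character group of `H^{3-i}(Δ,π;Â)`;
* the long exact sequence of the pair
  `⋯ → H^i(Δ,π;A) → H^i(Δ,A) → H^i(π,A) → H^{i+1}(Δ,π;A) → ⋯` holds;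
* `Â ≅ A` as abelian groups, so `#H^i(Δ,π;Â) = #H^i(Δ,π;A)`.
Then `χ(Δ,A)² = χ(π,A)`, where `χ` is the multiplicative Euler characteristic
`∏_i (#H^i)^{(-1)^i}` (all groups finite and almost all trivial). -/
theorem stmt18 (HΔA HπA HrelA HrelAhat : ℤ → Type)
    [∀ i, AddCommGroup (HΔA i)] [∀ i, Finite (HΔA i)]
    [∀ i, AddCommGroup (HπA i)] [∀ i, Finite (HπA i)]
    [∀ i, AddCommGroup (HrelA i)] [∀ i, Finite (HrelA i)]
    [∀ i, AddCommGroup (HrelAhat i)] [∀ i, Finite (HrelAhat i)]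
    (hneg : ∀ i : ℤ, i < 0 → Subsingleton (HΔA i) ∧ Subsingleton (HπA i)
        ∧ Subsingleton (HrelA i) ∧ Subsingleton (HrelAhat i))
    (frel : ∀ i : ℤ, HrelA i →+ HΔA i) (fres : ∀ i : ℤ, HΔA i →+ HπA i)
    (fconn : ∀ i : ℤ, HπA i →+ HrelA (i + 1))
    (hex1 : ∀ i : ℤ, Function.Exact (fconn i) (frel (i + 1)))
    (hex2 : ∀ i : ℤ, Function.Exact (frel i) (fres i))
    (hex3 : ∀ i : ℤ, Function.Exact (fres i) (fconn i))
    (hdual : ∀ i : ℤ, Nonempty (HΔA i ≃+ (HrelAhat (3 - i) →+ AddCircle (1 : ℚ))))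
    (hhat : ∀ i : ℤ, Nat.card (HrelAhat i) = Nat.card (HrelA i)) :
    ∀ N : ℕ, (∀ i : ℤ, (N : ℤ) ≤ i → Subsingleton (HΔA i) ∧ Subsingleton (HπA i)
        ∧ Subsingleton (HrelA i) ∧ Subsingleton (HrelAhat i)) →
      (∏ t ∈ Finset.range N, ((Nat.card (HΔA t) : ℚ) ^ ((-1 : ℤ) ^ t))) ^ 2
        = ∏ t ∈ Finset.range N, ((Nat.card (HπA t) : ℚ) ^ ((-1 : ℤ) ^ t)) := by
  intro N hN
  -- the six cardinality functions
  set Af : ℤ → ℚ := fun i => (Nat.card (HrelA i) : ℚ) with hAf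
  set Bf : ℤ → ℚ := fun i => (Nat.card (HΔA i) : ℚ) with hBf
  set Cf : ℤ → ℚ := fun i => (Nat.card (HπA i) : ℚ) with hCf
  set Kf : ℤ → ℚ := fun i => (Nat.card (fconn i).range : ℚ) with hKf
  set Rf : ℤ → ℚ := fun i => (Nat.card (frel i).range : ℚ) with hRf
  set Sf : ℤ → ℚ := fun i => (Nat.card (fres i).range : ℚ) with hSf
  have hkne : ∀ i, Kf i ≠ 0 := fun i => by
    simp only [hKf]; exact_mod_cast Nat.card_pos.ne'
  have hBne : ∀ i, Bf i ≠ 0 := fun i => by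
    simp only [hBf]; exact_mod_cast Nat.card_pos.ne'
  -- duality : Bf i = Af (3 - i)
  have hBA : ∀ i : ℤ, Bf i = Af (3 - i) := by
    intro i
    simp only [hBf, hAf]
    norm_cast
    rw [Nat.card_congr (hdual i).some.toEquiv, stmt18_char_card, hhat]
  -- long exact sequence identities
  have hb : ∀ i : ℤ, Bf i = Sf i * Rf i := by
    intro i
    simp only [hBf, hSf, hRf]
    norm_cast
    rw [stmt18_card_split (fres i), (hex2 i).addMonoidHom_ker_eq]
  have ha : ∀ i : ℤ, Af (i+1) = Rf (i+1) * Kf i := by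
    intro i
    simp only [hAf, hRf, hKf]
    norm_cast
    rw [stmt18_card_split (frel (i+1)), (hex1 i).addMonoidHom_ker_eq]
  have hc : ∀ i : ℤ, Cf i = Kf i * Sf i := by
    intro i
    simp only [hCf, hKf, hSf]
    norm_cast
    rw [stmt18_card_split (fconn i), (hex3 i).addMonoidHom_ker_eq]
  have hk0 : Kf (-1) = 1 := by
    simp only [hKf]
    exact_mod_cast stmt18_range_one_left (fconn (-1)) (hneg (-1) (by norm_num)).2.1
  have hkN : Kf ((N:ℤ) - 1) = 1 := by
    simp only [hKf]
    rcases lt_or_ge ((N:ℤ) - 1) 0 with h | h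
    · exact_mod_cast stmt18_range_one_left (fconn _) (hneg _ h).2.1
    · exact_mod_cast stmt18_range_one_right (fconn _) (hN ((N:ℤ) - 1 + 1) (by omega)).2.2.1
  have step1 : ∏ t ∈ Finset.range N, Bf t ^ ((-1:ℤ)^t)
      = (∏ t ∈ Finset.range N, Af t ^ ((-1:ℤ)^t))
        * ∏ t ∈ Finset.range N, Cf t ^ ((-1:ℤ)^t) :=
    stmt18_key Af Bf Cf Kf Rf Sf hkne ha hb hc N hk0 hkN
  -- duality step : ∏ Af = (∏ Bf)⁻¹
  have hB1 : ∀ i : ℤ, i < 0 → Bf i = 1 := fun i hi => by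
    simp only [hBf]
    exact_mod_cast stmt18_card_one _ (hneg i hi).1
  have hB2 : ∀ i : ℤ, 4 ≤ i → Bf i = 1 := fun i hi => by
    rw [hBA i]
    simp only [hAf]
    exact_mod_cast stmt18_card_one _ (hneg (3 - i) (by omega)).2.2.1
  have hB3 : ∀ i : ℤ, (N:ℤ) ≤ i → Bf i = 1 := fun i hi => by
    simp only [hBf]
    exact_mod_cast stmt18_card_one _ (hN i hi).1
  have hB4 : ∀ i : ℤ, i + N ≤ 3 → Bf i = 1 := fun i hi => by
    rw [hBA i]
    simp only [hAf]
    exact_mod_cast stmt18_card_one _ (hN (3 - i) (by omega)).2.2.1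
  have step2 : ∏ t ∈ Finset.range N, Af t ^ ((-1:ℤ)^t)
      = (∏ t ∈ Finset.range N, Bf t ^ ((-1:ℤ)^t))⁻¹ := by
    rw [← stmt18_dualprod Bf N hB1 hB2 hB3 hB4]
    apply Finset.prod_congr rfl
    intro t _
    congr 1
    have := hBA (3 - t)
    rw [show (3:ℤ) - (3 - (t:ℤ)) = t by ring] at this
    exact this.symm
  have hPBne : (∏ t ∈ Finset.range N, Bf t ^ ((-1:ℤ)^t)) ≠ 0 :=
    Finset.prod_ne_zero_iff.mpr fun t _ => zpow_ne_zero _ (hBne t)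
  have final : (∏ t ∈ Finset.range N, Bf t ^ ((-1:ℤ)^t)) ^ 2
      = ∏ t ∈ Finset.range N, Cf t ^ ((-1:ℤ)^t) := by
    rw [sq]
    nth_rewrite 2 [step1]
    rw [step2, ← mul_assoc, mul_inv_cancel₀ hPBne, one_mul]
  exact final
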